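/- (External-to-Policy Regret Bound) Let k ≥ 1, Γ ∈ [0,1), and T ≥ 1. Let (ρ_t)_{t=1}^T be nonnegative reals and let coefficients c_{t,i} ≥ 0 for t ∈ {1,...,T}, i ∈ {1,...,k} satisfy Σ_{i=1}^k c_{t,i} ≤ Γ for every t. Define the sequence (r_t) by r_t = Σ_{i=1}^k c_{t,i} r_{t-i} + ρ_t, with r_s = 0 for s ≤ 0. Then Σ_{t=1}^T r_t ≤ (1 + Γk/(1−Γ)) Σ_{t=1}^T ρ_t. -/

import Mathlib

/-!
STATEMENT 6 (External-to-Policy Regret Bound): if `r_t = ∑_{i=1}^k c_{t,i} r_{t-i} + ρ_t`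
with `r_s = 0` for `s ≤ 0`, nonnegative inputs `ρ_t`, nonnegative coefficients
`c_{t,i}` with `∑_{i=1}^k c_{t,i} ≤ Γ < 1`, then
`∑_{t=1}^T r_t ≤ (1 + Γk/(1−Γ)) ∑_{t=1}^T ρ_t`.
-/

private def fexp (k d : ℕ) : ℕ := (d + k - 1) / k

private lemma fexp_zero (k : ℕ) (hk : 1 ≤ k) : fexp k 0 = 0 := by
  unfold fexp; apply Nat.div_eq_of_lt; omega

private lemma fexp_pos (k d : ℕ) (hk : 1 ≤ k) (hd : 1 ≤ d) : 1 ≤ fexp k d := by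
  unfold fexp; rw [Nat.one_le_div_iff (by omega)]; omega

private lemma fexp_le_self (k d : ℕ) (hk : 1 ≤ k) : fexp k d ≤ d := by
  unfold fexp
  rcases Nat.eq_zero_or_pos d with h | h
  · subst h; simp [Nat.div_eq_of_lt (show k - 1 < k by omega)]
  · obtain ⟨e, rfl⟩ : ∃ e, d = e + 1 := ⟨d - 1, by omega⟩
    have h1 : e ≤ e * k := Nat.le_mul_of_pos_right e (by omega)
    have h2 : e + 1 + k - 1 < (e + 1 + 1) * k := by
      zify [show 1 ≤ e + 1 + k by omega]
      nlinarith
    have := (Nat.div_lt_iff_lt_mul (show 0 < k by omega)).2 h2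
    omega

private lemma fexp_sub (k d i : ℕ) (hk : 1 ≤ k) (hi1 : 1 ≤ i) (hik : i ≤ k)
    (hid : i ≤ d) : fexp k d ≤ fexp k (d - i) + 1 := by
  unfold fexp
  rw [← Nat.add_div_right (d - i + k - 1) (show 0 < k by omega)]
  exact Nat.div_le_div_right (by omega)

private lemma fexp_fiber (k d m : ℕ) (hk : 1 ≤ k) (hd : 1 ≤ d) (h : fexp k d = m) :
    k * (m - 1) + 1 ≤ d ∧ d ≤ k * m := by
  unfold fexp at h
  have h1 : k * m ≤ d + k - 1 := by
    have := Nat.div_mul_le_self (d + k - 1) k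
    rw [h] at this; nlinarith [this]
  have h2 : d + k - 1 < (m + 1) * k := by
    have : (d + k - 1) / k < m + 1 := by omega
    exact (Nat.div_lt_iff_lt_mul (show 0 < k by omega)).1 this
  have hm : 1 ≤ m := by
    have := fexp_pos k d hk hd; unfold fexp at this; omega
  have hdk : 1 ≤ d + k := by omega
  zify [hm, hdk] at h1 h2 ⊢
  constructor <;> nlinarith [h1, h2]

private lemma geo_aux (k : ℕ) (hk : 1 ≤ k) (Γ : ℝ) (hΓ0 : 0 ≤ Γ) (hΓ1 : Γ < 1)
    (N : ℕ) : ∑ d ∈ Finset.range (N + 1), Γ ^ (fexp k d) ≤ 1 + Γ * k / (1 - Γ) := by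
  have h1Γ : (0:ℝ) < 1 - Γ := by linarith
  have hsplit : Finset.range (N + 1) = insert 0 (Finset.Icc 1 N) := by
    ext x; simp [Finset.mem_Icc, Finset.mem_range]; omega
  rw [hsplit, Finset.sum_insert (by simp), fexp_zero k hk, pow_zero]
  gcongr
  rw [Finset.sum_comp (fun m => Γ ^ m) (fexp k)]
  have hcard : ∀ m ∈ (Finset.Icc 1 N).image (fexp k),
      ((Finset.Icc 1 N).filter (fun d => fexp k d = m)).card ≤ k := by
    intro m hm
    have hsub : (Finset.Icc 1 N).filter (fun d => fexp k d = m) ⊆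
        Finset.Icc (k * (m - 1) + 1) (k * m) := by
      intro d hd
      simp only [Finset.mem_filter, Finset.mem_Icc] at hd ⊢
      exact fexp_fiber k d m hk hd.1.1 hd.2
    have hle := Finset.card_le_card hsub
    rw [Nat.card_Icc] at hle
    simp only [Finset.mem_image, Finset.mem_Icc] at hm
    obtain ⟨d, ⟨hd1, _⟩, hdm⟩ := hm
    have hm1 : 1 ≤ m := hdm ▸ fexp_pos k d hk hd1
    have hkk : k * m = k * (m - 1) + k := by
      conv_lhs => rw [show m = (m - 1) + 1 by omega]
      ring
    omega
  calc ∑ m ∈ (Finset.Icc 1 N).image (fexp k),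
        ((Finset.Icc 1 N).filter (fun d => fexp k d = m)).card • Γ ^ m
      ≤ ∑ m ∈ (Finset.Icc 1 N).image (fexp k), (k : ℝ) * Γ ^ m := by
        apply Finset.sum_le_sum
        intro m hm
        rw [nsmul_eq_mul]
        exact mul_le_mul_of_nonneg_right (by exact_mod_cast hcard m hm) (by positivity)
    _ ≤ ∑ m ∈ Finset.Icc 1 N, (k : ℝ) * Γ ^ m := by
        apply Finset.sum_le_sum_of_subset_of_nonneg
        · intro m hm
          simp only [Finset.mem_image, Finset.mem_Icc] at hm ⊢
          obtain ⟨d, ⟨hd1, hd2⟩, hdm⟩ := hm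
          exact ⟨hdm ▸ fexp_pos k d hk hd1, hdm ▸ le_trans (fexp_le_self k d hk) hd2⟩
        · intros; positivity
    _ = (k : ℝ) * (Γ * ∑ m ∈ Finset.range N, Γ ^ m) := by
        rw [← Finset.mul_sum]
        congr 1
        rw [show Finset.Icc 1 N = Finset.Ico 1 (N + 1) by rw [Finset.Ico_add_one_right_eq_Icc],
          Finset.sum_Ico_eq_sum_range, Finset.mul_sum]
        simp only [Nat.add_sub_cancel]
        apply Finset.sum_congr rfl
        intro x _
        rw [pow_add, pow_one]
    _ ≤ (k : ℝ) * (Γ * (1 / (1 - Γ))) := by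
        gcongr
        rw [le_div_iff₀ h1Γ]
        have hgs := geom_sum_mul Γ N
        nlinarith [pow_nonneg hΓ0 N]
    _ = Γ * k / (1 - Γ) := by field_simp

theorem external_to_policy_regret_bound
    (k : ℕ) (hk : 1 ≤ k) (T : ℕ) (hT : 1 ≤ T)
    (Γ : ℝ) (hΓ0 : 0 ≤ Γ) (hΓ1 : Γ < 1)
    (c : ℤ → ℕ → ℝ)
    (hc : ∀ (t : ℤ) (i : ℕ), 1 ≤ t → t ≤ T → 1 ≤ i → i ≤ k → 0 ≤ c t i)
    (hcsum : ∀ t : ℤ, 1 ≤ t → t ≤ T → ∑ i ∈ Finset.Icc 1 k, c t i ≤ Γ)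
    (ρ : ℤ → ℝ) (hρ : ∀ t : ℤ, 1 ≤ t → t ≤ T → 0 ≤ ρ t)
    (r : ℤ → ℝ) (hr0 : ∀ s : ℤ, s ≤ 0 → r s = 0)
    (hrec : ∀ t : ℤ, 1 ≤ t → t ≤ T →
      r t = (∑ i ∈ Finset.Icc 1 k, c t i * r (t - i)) + ρ t) :
    ∑ t ∈ Finset.Icc (1 : ℤ) (T : ℤ), r t ≤
      (1 + Γ * k / (1 - Γ)) * ∑ t ∈ Finset.Icc (1 : ℤ) (T : ℤ), ρ t := by
  -- pointwise bound
  have key : ∀ n : ℕ, ∀ t : ℤ, t ≤ n → 1 ≤ t → t ≤ T →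
      r t ≤ ∑ s ∈ Finset.Icc 1 t, Γ ^ (fexp k (t - s).toNat) * ρ s := by
    intro n
    induction n with
    | zero => intro t h1 h2 _; omega
    | succ n ih =>
      intro t htn ht1 htT
      rw [hrec t ht1 htT]
      -- the auxiliary sum Y'
      set Y : ℝ := ∑ s ∈ Finset.Icc 1 (t - 1), Γ ^ (fexp k (t - s).toNat - 1) * ρ s with hY
      have hρnn : ∀ s : ℤ, s ∈ Finset.Icc 1 (t - 1) → 0 ≤ ρ s := by
        intro s hs
        rw [Finset.mem_Icc] at hs
        exact hρ s hs.1 (by omega)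
      have hYnn : 0 ≤ Y := by
        apply Finset.sum_nonneg
        intro s hs
        exact mul_nonneg (pow_nonneg hΓ0 _) (hρnn s hs)
      have hri : ∀ i ∈ Finset.Icc 1 k, r (t - i) ≤ Y := by
        intro i hi
        rw [Finset.mem_Icc] at hi
        rcases le_or_gt (t - i) 0 with h | h
        · rw [hr0 _ h]; exact hYnn
        · have hb := ih (t - i) (by omega) (by omega) (by omega)
          refine hb.trans ?_
          calc ∑ s ∈ Finset.Icc 1 (t - i), Γ ^ (fexp k (t - i - s).toNat) * ρ s
              ≤ ∑ s ∈ Finset.Icc 1 (t - i), Γ ^ (fexp k (t - s).toNat - 1) * ρ s := by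
                apply Finset.sum_le_sum
                intro s hs
                rw [Finset.mem_Icc] at hs
                apply mul_le_mul_of_nonneg_right _ (hρ s hs.1 (by omega))
                apply pow_le_pow_of_le_one hΓ0 hΓ1.le
                have h1 : (t - i - s).toNat = (t - s).toNat - i := by omega
                have h2 : i ≤ (t - s).toNat := by omega
                have h3 := fexp_sub k (t - s).toNat i hk hi.1 hi.2 h2
                rw [h1]
                omega
            _ ≤ Y := by
                apply Finset.sum_le_sum_of_subset_of_nonneg
                · apply Finset.Icc_subset_Icc_right; omega
                · intro s hs _
                  rw [Finset.mem_Icc] at hs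
                  exact mul_nonneg (pow_nonneg hΓ0 _) (hρ s hs.1 (by omega))
      have hsum1 : ∑ i ∈ Finset.Icc 1 k, c t i * r (t - i) ≤ Γ * Y := by
        calc ∑ i ∈ Finset.Icc 1 k, c t i * r (t - i)
            ≤ ∑ i ∈ Finset.Icc 1 k, c t i * Y := by
              apply Finset.sum_le_sum
              intro i hi
              rw [Finset.mem_Icc] at hi
              exact mul_le_mul_of_nonneg_left (hri i (by rw [Finset.mem_Icc]; exact hi))
                (hc t i ht1 htT hi.1 hi.2)
          _ = (∑ i ∈ Finset.Icc 1 k, c t i) * Y := by rw [Finset.sum_mul]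
          _ ≤ Γ * Y := mul_le_mul_of_nonneg_right (hcsum t ht1 htT) hYnn
      have hGY : Γ * Y = ∑ s ∈ Finset.Icc 1 (t - 1), Γ ^ (fexp k (t - s).toNat) * ρ s := by
        rw [hY, Finset.mul_sum]
        apply Finset.sum_congr rfl
        intro s hs
        rw [Finset.mem_Icc] at hs
        have h1 : 1 ≤ (t - s).toNat := by omega
        have h2 : 1 ≤ fexp k (t - s).toNat := fexp_pos k _ hk h1
        rw [← mul_assoc, ← pow_succ']
        congr 2
        omega
      have hfin : ∑ s ∈ Finset.Icc 1 t, Γ ^ (fexp k (t - s).toNat) * ρ s =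
          (∑ s ∈ Finset.Icc 1 (t - 1), Γ ^ (fexp k (t - s).toNat) * ρ s) + ρ t := by
        have hins : Finset.Icc (1:ℤ) t = insert t (Finset.Icc 1 (t - 1)) := by
          ext x; simp only [Finset.mem_Icc, Finset.mem_insert]; omega
        rw [hins, Finset.sum_insert (by simp [Finset.mem_Icc])]
        have : (t - t).toNat = 0 := by omega
        rw [this, fexp_zero k hk, pow_zero, one_mul]
        ring
      rw [hfin, ← hGY]
      exact add_le_add_left hsum1 _
  -- sum the pointwise bound and swap
  calc ∑ t ∈ Finset.Icc (1:ℤ) T, r t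
      ≤ ∑ t ∈ Finset.Icc (1:ℤ) T, ∑ s ∈ Finset.Icc 1 t, Γ ^ (fexp k (t - s).toNat) * ρ s := by
        apply Finset.sum_le_sum
        intro t ht
        rw [Finset.mem_Icc] at ht
        exact key T t (by omega) ht.1 ht.2
    _ = ∑ s ∈ Finset.Icc (1:ℤ) T, ∑ t ∈ Finset.Icc s T, Γ ^ (fexp k (t - s).toNat) * ρ s := by
        apply Finset.sum_comm'
        intro x y
        simp only [Finset.mem_Icc]
        omega
    _ ≤ ∑ s ∈ Finset.Icc (1:ℤ) T, (1 + Γ * k / (1 - Γ)) * ρ s := by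
        apply Finset.sum_le_sum
        intro s hs
        rw [Finset.mem_Icc] at hs
        rw [← Finset.sum_mul]
        apply mul_le_mul_of_nonneg_right _ (hρ s hs.1 hs.2)
        -- reindex: t ∈ Icc s T  ↦  d = (t - s).toNat ∈ range (N+1)
        have hre : ∑ t ∈ Finset.Icc s T, Γ ^ (fexp k (t - s).toNat) =
            ∑ d ∈ Finset.range ((T - s).toNat + 1), Γ ^ (fexp k d) := by
          apply Finset.sum_nbij' (fun t => (t - s).toNat) (fun d => s + d)
          · intro t ht; rw [Finset.mem_Icc] at ht; rw [Finset.mem_range]; omega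
          · intro d hd; rw [Finset.mem_range] at hd; rw [Finset.mem_Icc]; omega
          · intro t ht; rw [Finset.mem_Icc] at ht; omega
          · intro d hd; rw [Finset.mem_range] at hd; omega
          · intro t ht; rfl
        rw [hre]
        exact geo_aux k hk Γ hΓ0 hΓ1 _
    _ = (1 + Γ * k / (1 - Γ)) * ∑ t ∈ Finset.Icc (1:ℤ) T, ρ t := by
        rw [Finset.mul_sum]
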